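/- Let C ≥ 1, 0 ≤ β ≤ 1, b > β, 0 ≤ α < 1, and let ℓ₀, ℓ, L be natural numbers with ℓ₀ ≤ ℓ ≤ L − 2 and α·(ℓ₀ + 1) ≥ log₂ C. Let p = ⌈bL/(ℓ+1)⌉. Then 2^{1 + (ℓ+1)β − (ℓ+1)p} · C^{p+1} ≤ max{C²·2^{1+(ℓ₀+1)β}, 2^{1−β}·C^{2(1+b)}} · max{2^{−(1−α)bL}, 2^{−(b−β)L}}. -/

import Mathlib

set_option maxHeartbeats 1000000 in
/-- Core exponent inequality. -/
lemma key_exp (β b α c n₀ n m L P : ℝ)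
    (hc0 : 0 ≤ c) (hcα : c ≤ α * n₀)
    (hβ0 : 0 ≤ β) (hβ1 : β ≤ 1) (hbβ : β < b)
    (hα0 : 0 ≤ α) (hα1 : α < 1)
    (hn₀ : 1 ≤ n₀) (hn₀n : n₀ ≤ n) (hnm : n ≤ m) (hL : L = m + 1)
    (hP : b * L / n ≤ P) :
    1 + n * β - n * P + c * (P + 1) ≤
      max (2 * c + (1 + n₀ * β)) ((1 - β) + c * (2 * (1 + b))) +
        max (-(1 - α) * b * L) (-(b - β) * L) := by
  have hn0 : (0:ℝ) < n := by linarith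
  have hn₀0 : (0:ℝ) < n₀ := by linarith
  have hm0 : (0:ℝ) < m := by linarith
  have hb0 : 0 ≤ b := by linarith
  have hL0 : 0 ≤ L := by linarith
  have hcn : c < n := by nlinarith
  -- step 1 : replace P by q = b*L/n
  set q : ℝ := b * L / n with hqdef
  have hq : q * n = b * L := div_mul_cancel₀ _ (ne_of_gt hn0)
  have step1 : 1 + n * β - n * P + c * (P + 1) ≤ 1 + n * β + c - b * L + q * c := by
    nlinarith [mul_le_mul_of_nonneg_right hP (le_of_lt (sub_pos.mpr hcn))]
  refine le_trans step1 ?_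
  -- K / n = q * c where K = b * L * c
  have hK0 : 0 ≤ b * L * c := by positivity
  by_cases hcase : b * L * c ≤ β * (m * n)
  · -- go to the right endpoint m
    have hvm : (b * L * c / m) * m = b * L * c := div_mul_cancel₀ _ (ne_of_gt hm0)
    have hum : q * c * n = b * L * c := by rw [hqdef]; field_simp
    have h2 : q * c ≤ β * (m - n) + b * L * c / m := by
      nlinarith [mul_nonneg (sub_nonneg.mpr hnm) (sub_nonneg.mpr hcase),
        mul_pos hn0 hm0]
    have h3 : b * L * c / m ≤ 2 * b * c := by
      rw [div_le_iff₀ hm0]; nlinarith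
    have h4 : 1 + n * β + c - b * L + q * c ≤
        ((1 - β) + c * (2 * (1 + b))) + (-(b - β) * L) := by
      nlinarith
    refine le_trans h4 (add_le_add (le_max_right _ _) (le_max_right _ _))
  · push_neg at hcase
    -- go to the left endpoint n₀
    have hv : (b * L * c / n₀) * n₀ = b * L * c := div_mul_cancel₀ _ (ne_of_gt hn₀0)
    have hum : q * c * n = b * L * c := by rw [hqdef]; field_simp
    have haux : β * (n * n₀) ≤ β * (m * n) := by
      nlinarith [mul_nonneg (mul_nonneg hβ0 hn0.le) (sub_nonneg.mpr (hn₀n.trans hnm))]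
    have haux2 : β * (n * n₀) < b * L * c := lt_of_le_of_lt haux hcase
    have h2 : q * c ≤ β * (n₀ - n) + b * L * c / n₀ := by
      rw [← mul_le_mul_iff_of_pos_right (mul_pos hn0 hn₀0)]
      have e : (β * (n₀ - n) + b * L * c / n₀) * (n * n₀) =
          β * (n₀ - n) * (n * n₀) + (b * L * c / n₀ * n₀) * n := by ring
      have e2 : q * c * (n * n₀) = (q * c * n) * n₀ := by ring
      rw [e, hv, e2, hum]
      nlinarith [mul_nonneg (sub_nonneg.mpr hn₀n) (sub_pos.mpr haux2).le]
    have h3 : b * L * c / n₀ ≤ α * (b * L) := by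
      rw [div_le_iff₀ hn₀0]
      nlinarith [mul_le_mul_of_nonneg_left hcα (mul_nonneg hb0 hL0)]
    have h4 : 1 + n * β + c - b * L + q * c ≤
        (2 * c + (1 + n₀ * β)) + (-(1 - α) * b * L) := by
      nlinarith
    refine le_trans h4 (add_le_add (le_max_left _ _) (le_max_left _ _))

/-- the core numerical estimate of the hp-adaptive error bound, with
degree choice `p = ⌈bL/(ℓ+1)⌉` on a cell of level `ℓ₀ ≤ ℓ ≤ L−2` and the constraint
`α(ℓ₀+1) ≥ log₂ C`. -/
theorem stmt3 (C β b α : ℝ) (ℓ₀ ℓ L : ℕ)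
    (hC : 1 ≤ C) (hβ0 : 0 ≤ β) (hβ1 : β ≤ 1) (hbβ : β < b)
    (hα0 : 0 ≤ α) (hα1 : α < 1)
    (hℓ₀ℓ : ℓ₀ ≤ ℓ) (hℓL : (ℓ : ℤ) ≤ (L : ℤ) - 2)
    (hlog : Real.logb 2 C ≤ α * ((ℓ₀ : ℝ) + 1)) :
    (2:ℝ) ^ (1 + ((ℓ : ℝ) + 1) * β -
        ((ℓ : ℝ) + 1) * ((⌈b * (L : ℝ) / ((ℓ : ℝ) + 1)⌉ : ℤ) : ℝ)) *
      C ^ ((⌈b * (L : ℝ) / ((ℓ : ℝ) + 1)⌉ : ℤ) + 1) ≤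
    max (C ^ 2 * (2:ℝ) ^ (1 + ((ℓ₀ : ℝ) + 1) * β)) ((2:ℝ) ^ (1 - β) * C ^ (2 * (1 + b))) *
      max ((2:ℝ) ^ (-(1 - α) * b * (L : ℝ))) ((2:ℝ) ^ (-(b - β) * (L : ℝ))) := by
  have hC0 : (0:ℝ) < C := lt_of_lt_of_le one_pos hC
  set c : ℝ := Real.logb 2 C with hc
  have hc0 : 0 ≤ c := Real.logb_nonneg one_lt_two hC
  have hC2 : C = (2:ℝ) ^ c := (Real.rpow_logb two_pos (by norm_num) hC0).symm
  set n : ℝ := (ℓ : ℝ) + 1 with hn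
  set n₀ : ℝ := (ℓ₀ : ℝ) + 1 with hn₀
  set k : ℤ := ⌈b * (L : ℝ) / n⌉ with hk
  have hcast : (ℓ₀:ℝ) ≤ (ℓ:ℝ) := Nat.cast_le.mpr hℓ₀ℓ
  have hcast2 : (ℓ:ℝ) ≤ (L:ℝ) - 2 := by exact_mod_cast hℓL
  have hℓ₀0 : (0:ℝ) ≤ (ℓ₀:ℝ) := Nat.cast_nonneg ℓ₀
  have hn₀1 : (1:ℝ) ≤ n₀ := by rw [hn₀]; linarith
  have hn₀n : n₀ ≤ n := by rw [hn, hn₀]; linarith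
  have hnm : n ≤ (L:ℝ) - 1 := by rw [hn]; linarith
  have hP : b * (L:ℝ) / n ≤ ((k : ℤ) : ℝ) := Int.le_ceil _
  -- rewrite everything in base 2
  have e1 : C ^ (k + 1) = (2:ℝ) ^ (c * (((k:ℤ):ℝ) + 1)) := by
    rw [hC2, ← Real.rpow_intCast ((2:ℝ) ^ c) (k + 1), ← Real.rpow_mul (by norm_num)]
    push_cast; ring_nf
  have e2 : C ^ 2 = (2:ℝ) ^ (c * 2) := by
    rw [hC2, ← Real.rpow_natCast ((2:ℝ) ^ c) 2, ← Real.rpow_mul (by norm_num)]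
    norm_num
  have e3 : C ^ (2 * (1 + b)) = (2:ℝ) ^ (c * (2 * (1 + b))) := by
    rw [hC2, ← Real.rpow_mul (by norm_num)]
  rw [e1, e2, e3, ← Real.rpow_add two_pos, ← Real.rpow_add two_pos,
    ← Real.rpow_add two_pos]
  have hmax : ∀ x y : ℝ, max ((2:ℝ) ^ x) ((2:ℝ) ^ y) = (2:ℝ) ^ (max x y) := by
    intro x y
    rcases le_total x y with h | h
    · rw [max_eq_right ((Real.rpow_le_rpow_left_iff one_lt_two).mpr h),
        max_eq_right h]
    · rw [max_eq_left ((Real.rpow_le_rpow_left_iff one_lt_two).mpr h),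
        max_eq_left h]
  rw [hmax, hmax, ← Real.rpow_add two_pos]
  rw [Real.rpow_le_rpow_left_iff one_lt_two]
  have key := key_exp β b α c n₀ n ((L:ℝ) - 1) (L:ℝ) ((k:ℤ):ℝ) hc0 hlog hβ0 hβ1 hbβ
    hα0 hα1 hn₀1 hn₀n hnm (by ring) hP
  refine le_trans key (le_of_eq ?_)
  ring_nf
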